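/- (Completeness of the pruning condition.) Let DB be an uncertain database all of whose existential probabilities lie in [0,1], with each item x carrying a weight w(x) ∈ [0,1], and let minWES > 0. If α is a nonempty pattern with WES(α) ≥ minWES, then every nonempty prefix γ of α satisfies wExpSup^cap(γ) ≥ minWES; hence mining with the pruning condition wExpSup^cap ≥ minWES finds the complete set of weighted frequent patterns. -/

import Mathlib

variable {I : Type*}

/-- An uncertain sequence: a finite list of (item, existential probability) pairs. -/
abbrev USeq (I : Type*) := List (I × ℝ)

/-- An uncertain database: a finite list of uncertain sequences. -/
abbrev UDB (I : Type*) := List (USeq I)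

/-- `α` occurs in `S`: some sublist of `S` has item list `α`. -/
def Occurs (α : List I) (S : USeq I) : Prop :=
  ∃ o : USeq I, o.Sublist S ∧ o.map Prod.fst = α

/-- Maximum occurrence probability of pattern `α` in `S`
(`0` if `α` has no occurrence in `S`; `1` for the empty pattern). -/
noncomputable def maxPrS [DecidableEq I] (α : List I) (S : USeq I) : ℝ :=
  WithBot.unbotD 0 ((S.sublists.filter fun o => decide (o.map Prod.fst = α)).map
      fun o => (o.map Prod.snd).prod).maximum

/-- Greedy projection: `projSeq α S = some S'` iff `α` occurs in `S`, in which case `S'`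
is the suffix of `S` strictly after the last matched position of the greedy (leftmost)
occurrence of `α` in `S`.  For the empty pattern it is `S` itself. -/
def projSeq [DecidableEq I] : List I → USeq I → Option (USeq I)
  | [], S => some S
  | _ :: _, [] => none
  | i :: α, (x, _) :: rest =>
      if x = i then projSeq α rest else projSeq (i :: α) rest

/-- The projected database `DB|α`. -/
def projDB [DecidableEq I] (α : List I) (DB : UDB I) : UDB I :=
  DB.filterMap (projSeq α)

/-- `P̂_D(i)`: maximum probability of an entry with item `i` over all sequences of `D`
(`0` if `i` occurs in no sequence of `D`). -/
noncomputable def Phat [DecidableEq I] (D : UDB I) (i : I) : ℝ :=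
  WithBot.unbotD 0 ((D.flatten.filter fun e => decide (e.1 = i)).map Prod.snd).maximum

/-- `maxPr(α)` relative to `DB`: the product of per-step maximum probabilities over the
successively projected databases. -/
noncomputable def maxPrDB [DecidableEq I] (DB : UDB I) (α : List I) : ℝ :=
  ∏ k : Fin α.length, Phat (projDB (α.take k.val) DB) (α.get k)

/-- Expected support of `α` in `DB`. -/
noncomputable def expSup [DecidableEq I] (DB : UDB I) (α : List I) : ℝ :=
  (DB.map fun S => maxPrS α S).sum

/-- `expSup^cap` of a nonempty pattern (junk value `0` on the empty pattern). -/
noncomputable def expSupCap [DecidableEq I] (DB : UDB I) (α : List I) : ℝ :=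
  match α.getLast? with
  | none => 0
  | some i =>
      maxPrDB DB α.dropLast *
        ((projDB α.dropLast DB).map fun S' => maxPrS [i] S').sum

/-- Number of sequences of `D` in which item `i` occurs. -/
def supCount [DecidableEq I] (D : UDB I) (i : I) : ℕ :=
  (D.filter fun S => decide (i ∈ S.map Prod.fst)).length

/-- `expSupport^top` of a nonempty pattern (junk value `0` on the empty pattern). -/
noncomputable def expSupTop [DecidableEq I] (DB : UDB I) (α : List I) : ℝ :=
  match α.getLast? with
  | none => 0
  | some i =>
      maxPrDB DB α.dropLast * Phat (projDB α.dropLast DB) i *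
        (supCount (projDB α.dropLast DB) i : ℝ)

/-- Item `i` occurs in some sequence of `D`. -/
def ItemOccursIn (D : UDB I) (i : I) : Prop :=
  ∃ S ∈ D, i ∈ S.map Prod.fst

/-- `sWeight`: average weight of the items of a pattern. -/
noncomputable def sWeight (w : I → ℝ) (α : List I) : ℝ :=
  (α.map w).sum / (α.length : ℝ)

/-- Maximum weight among the items of a pattern (`0` for the empty pattern). -/
noncomputable def mxWs (w : I → ℝ) (α : List I) : ℝ :=
  WithBot.unbotD 0 (α.map w).maximum

/-- Maximum weight among items occurring in some sequence of `D` (`0` if none). -/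
noncomputable def mxWDB (w : I → ℝ) (D : UDB I) : ℝ :=
  WithBot.unbotD 0 (D.flatten.map fun e => w e.1).maximum

/-- `wgt^cap`. -/
noncomputable def wgtCap [DecidableEq I] (DB : UDB I) (w : I → ℝ) (α : List I) : ℝ :=
  max (mxWDB w (projDB α.dropLast DB)) (mxWs w α)

/-- Weighted expected support. -/
noncomputable def WES [DecidableEq I] (DB : UDB I) (w : I → ℝ) (α : List I) : ℝ :=
  expSup DB α * sWeight w α

/-- `wExpSup^cap`. -/
noncomputable def wExpSupCap [DecidableEq I] (DB : UDB I) (w : I → ℝ) (α : List I) : ℝ :=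
  expSupCap DB α * wgtCap DB w α
section Aux

variable [DecidableEq I]

/-- Helper: a real below a `WithBot` maximum is below `unbot' 0`. -/
lemma aux_le_unbot' {a : ℝ} {m : WithBot ℝ} (h : (a : WithBot ℝ) ≤ m) : a ≤ WithBot.unbotD 0 m := by
  cases m with
  | bot => simp at h
  | coe m => exact_mod_cast h

lemma aux_unbot'_le {l : List ℝ} {c : ℝ} (hc : 0 ≤ c) (h : ∀ a ∈ l, a ≤ c) :
    WithBot.unbotD 0 l.maximum ≤ c := by
  cases hm : l.maximum with
  | bot => simpa using hc
  | coe m => simpa using h m (List.maximum_mem hm)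

lemma aux_unbot'_nonneg {l : List ℝ} (h : ∀ a ∈ l, 0 ≤ a) : 0 ≤ WithBot.unbotD 0 l.maximum := by
  cases hm : l.maximum with
  | bot => simp
  | coe m => simpa using h m (List.maximum_mem hm)

/-- The projection is a sublist of the original sequence. -/
lemma aux_list_prod_le_one {l : List ℝ} (h0 : ∀ x ∈ l, 0 ≤ x) (h1 : ∀ x ∈ l, x ≤ 1) :
    l.prod ≤ 1 := by
  induction l with
  | nil => simp
  | cons a l ih =>
    rw [List.prod_cons]
    have hl0 : 0 ≤ l.prod := List.prod_nonneg fun x hx => h0 x (by simp [hx])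
    calc a * l.prod ≤ 1 * 1 := by
          exact mul_le_mul (h1 a (by simp)) (ih (fun x hx => h0 x (by simp [hx]))
            (fun x hx => h1 x (by simp [hx]))) hl0 zero_le_one
      _ = 1 := by ring

/-- The projection is a sublist of the original sequence. -/
lemma projSeq_sublist : ∀ (γ : List I) (S T : USeq I), projSeq γ S = some T → T.Sublist S := by
  intro γ S
  induction S generalizing γ with
  | nil =>
    intro T h
    cases γ with
    | nil => simp [projSeq] at h; simp [h]
    | cons i γ => simp [projSeq] at h
  | cons x rest ih =>
    intro T h
    cases γ with
    | nil => simp [projSeq] at h; simp [h]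
    | cons i γ =>
      obtain ⟨a, p⟩ := x
      by_cases hx : a = i
      · simp only [projSeq, if_pos hx] at h
        exact (ih γ T h).trans (List.sublist_cons_self _ _)
      · simp only [projSeq, if_neg hx] at h
        exact (ih (i :: γ) T h).trans (List.sublist_cons_self _ _)

/-- Projecting by a longer pattern gives a (sub)list of projecting by the shorter one. -/
lemma projSeq_cons_le :
    ∀ (S : USeq I) (i : I) (γ : List I) (T : USeq I),
      projSeq (i :: γ) S = some T → ∃ T', projSeq γ S = some T' ∧ T.Sublist T' := by
  intro S
  induction S with
  | nil => intro i γ T h; simp [projSeq] at h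
  | cons x rest ih =>
    intro i γ T h
    obtain ⟨a, p⟩ := x
    by_cases hx : a = i
    · simp only [projSeq, if_pos hx] at h
      cases γ with
      | nil =>
        refine ⟨(a, p) :: rest, by simp [projSeq], ?_⟩
        simp only [projSeq, Option.some.injEq] at h
        exact h ▸ List.sublist_cons_self _ _
      | cons j γ' =>
        by_cases hxj : a = j
        · obtain ⟨T', hT', hsub⟩ := ih j γ' T h
          exact ⟨T', by simp [projSeq, if_pos hxj, hT'], hsub⟩
        · exact ⟨T, by simp [projSeq, if_neg hxj, h], List.Sublist.refl T⟩
    · simp only [projSeq, if_neg hx] at h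
      obtain ⟨T1, hT1, hsub1⟩ := ih i γ T h
      cases γ with
      | nil =>
        refine ⟨(a, p) :: rest, by simp [projSeq], ?_⟩
        simp only [projSeq, Option.some.injEq] at hT1
        exact (hT1 ▸ hsub1).trans (List.sublist_cons_self _ _)
      | cons j γ' =>
        by_cases hxj : a = j
        · obtain ⟨T2, hT2, hsub2⟩ := ih j γ' T1 hT1
          exact ⟨T2, by simp [projSeq, if_pos hxj, hT2], hsub1.trans hsub2⟩
        · exact ⟨T1, by simp [projSeq, if_neg hxj, hT1], hsub1⟩

lemma projSeq_append (a b : List I) :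
    ∀ S : USeq I, projSeq (a ++ b) S = (projSeq a S).bind (projSeq b) := by
  induction a with
  | nil => intro S; simp [projSeq]
  | cons j a' ih =>
    intro S
    induction S with
    | nil => simp [projSeq]
    | cons x rest ihS =>
      obtain ⟨y, p⟩ := x
      by_cases hy : y = j
      · simp only [List.cons_append, projSeq, if_pos hy]
        exact ih rest
      · simpa only [List.cons_append, projSeq, if_neg hy] using ihS

/-- Any split occurrence factors through the greedy projection. -/
lemma occurrence_proj :
    ∀ (S : USeq I) (γ : List I) (o1 o2 : USeq I),
      (o1 ++ o2).Sublist S → o1.map Prod.fst = γ →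
      ∃ T, projSeq γ S = some T ∧ o2.Sublist T := by
  intro S
  induction S with
  | nil =>
    intro γ o1 o2 hsub hmap
    have h0 : o1 ++ o2 = [] := List.sublist_nil.mp hsub
    have h1 : o1 = [] := by cases o1 <;> simp_all
    have h2 : o2 = [] := by cases o2 <;> simp_all
    subst h1; subst h2
    simp only [List.map_nil] at hmap
    exact ⟨[], by rw [← hmap]; simp [projSeq], List.Sublist.refl _⟩
  | cons x rest ih =>
    intro γ o1 o2 hsub hmap
    cases γ with
    | nil =>
      have h1 : o1 = [] := by cases o1 <;> simp_all
      subst h1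
      exact ⟨x :: rest, by simp [projSeq], by simpa using hsub⟩

    | cons i γ' =>
      obtain ⟨e, o1'⟩ : ∃ e o1', o1 = e :: o1' := by
        cases o1 with
        | nil => simp at hmap
        | cons e o1' => exact ⟨e, o1', rfl⟩
      obtain ⟨o1', rfl⟩ := o1'
      simp only [List.map_cons, List.cons.injEq] at hmap
      obtain ⟨he, hmap'⟩ := hmap
      obtain ⟨a, p⟩ := x
      rcases hsub with _ | ⟨_, hsub'⟩ | ⟨_, hsub'⟩
      · -- (e :: o1' ++ o2) <+ rest
        obtain ⟨T, hT, hsubT⟩ := ih (i :: γ') (e :: o1') o2 hsub' (by simp [he, hmap'])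
        by_cases hx : a = i
        · obtain ⟨T', hT', hTT'⟩ := projSeq_cons_le rest i γ' T hT
          exact ⟨T', by simp [projSeq, if_pos hx, hT'], hsubT.trans hTT'⟩
        · exact ⟨T, by simp [projSeq, if_neg hx, hT], hsubT⟩
      · -- e = (a,p), (o1' ++ o2) <+ rest
        have hx : a = i := by simpa using he
        obtain ⟨T, hT, hsubT⟩ := ih γ' o1' o2 hsub' hmap'
        exact ⟨T, by simp [projSeq, if_pos hx, hT], hsubT⟩

lemma projDB_nil (DB : UDB I) : projDB ([] : List I) DB = DB := by
  induction DB with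
  | nil => rfl
  | cons S DB ih => simpa [projDB, List.filterMap_cons, projSeq] using ih

lemma projDB_append (a b : List I) (DB : UDB I) :
    projDB (a ++ b) DB = projDB b (projDB a DB) := by
  simp [projDB, List.filterMap_filterMap]
  congr 1
  funext S
  exact projSeq_append a b S

lemma maxPrDB_nil (DB : UDB I) : maxPrDB DB [] = 1 := by
  simp [maxPrDB]

lemma maxPrDB_cons (DB : UDB I) (j : I) (γ : List I) :
    maxPrDB DB (j :: γ) = Phat DB j * maxPrDB (projDB [j] DB) γ := by
  unfold maxPrDB
  show (∏ k : Fin (γ.length + 1), Phat (projDB ((j :: γ).take k.val) DB) ((j :: γ).get k)) = _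
  rw [Fin.prod_univ_succ]
  congr 1
  · simp [projDB_nil]
  · apply Finset.prod_congr rfl
    intro k _
    have h1 : (j :: γ).take ((Fin.succ k).val) = [j] ++ γ.take k.val := by
      simp [List.take_cons]
    rw [h1, projDB_append]
    rfl

lemma Phat_nonneg {D : UDB I} (hD : ∀ S ∈ D, ∀ e ∈ S, (0:ℝ) ≤ e.2) (i : I) :
    0 ≤ Phat D i := by
  apply aux_unbot'_nonneg
  intro a ha
  simp only [List.mem_map, List.mem_filter] at ha
  obtain ⟨e, ⟨hef, _⟩, rfl⟩ := ha
  obtain ⟨S, hS, heS⟩ := List.mem_flatten.mp hef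
  exact hD S hS e heS

lemma le_Phat {D : UDB I} {S : USeq I} {e : I × ℝ} (hS : S ∈ D) (he : e ∈ S) :
    e.2 ≤ Phat D e.1 := by
  apply aux_le_unbot'
  apply List.le_maximum_of_mem'
  simp only [List.mem_map]
  refine ⟨e, ?_, rfl⟩
  rw [List.mem_filter]
  exact ⟨List.mem_flatten.mpr ⟨S, hS, he⟩, by simp⟩

lemma mem_projDB {γ : List I} {DB : UDB I} {T : USeq I} :
    T ∈ projDB γ DB ↔ ∃ S ∈ DB, projSeq γ S = some T := by
  simp [projDB, List.mem_filterMap]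

lemma projDB_prob {DB : UDB I} (hp : ∀ S ∈ DB, ∀ e ∈ S, e.2 ∈ Set.Icc (0:ℝ) 1)
    (γ : List I) : ∀ T ∈ projDB γ DB, ∀ e ∈ T, e.2 ∈ Set.Icc (0:ℝ) 1 := by
  intro T hT e he
  obtain ⟨S, hS, hproj⟩ := mem_projDB.mp hT
  exact hp S hS e ((projSeq_sublist γ S T hproj).subset he)

lemma maxPrDB_nonneg {DB : UDB I} (hp : ∀ S ∈ DB, ∀ e ∈ S, e.2 ∈ Set.Icc (0:ℝ) 1)
    (γ : List I) : 0 ≤ maxPrDB DB γ := by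
  unfold maxPrDB
  apply Finset.prod_nonneg
  intro k _
  exact Phat_nonneg (fun S hS e he => (projDB_prob hp _ S hS e he).1) _

lemma le_maxPrS {α : List I} {S o : USeq I} (ho : o.Sublist S) (hm : o.map Prod.fst = α) :
    (o.map Prod.snd).prod ≤ maxPrS α S := by
  apply aux_le_unbot'
  apply List.le_maximum_of_mem'
  simp only [List.mem_map]
  refine ⟨o, ?_, rfl⟩
  simp [List.mem_filter, List.mem_sublists, ho, hm]

lemma maxPrS_nonneg {α : List I} {S : USeq I} (hp : ∀ e ∈ S, (0:ℝ) ≤ e.2) :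
    0 ≤ maxPrS α S := by
  apply aux_unbot'_nonneg
  intro a ha
  simp only [List.mem_map, List.mem_filter, List.mem_sublists] at ha
  obtain ⟨o, ⟨ho, _⟩, rfl⟩ := ha
  exact List.prod_nonneg (by
    intro x hx
    simp only [List.mem_map] at hx
    obtain ⟨e, heo, rfl⟩ := hx
    exact hp e (ho.subset heo))

lemma maxPrS_le_of_forall {α : List I} {S : USeq I} {c : ℝ} (hc : 0 ≤ c)
    (h : ∀ o : USeq I, o.Sublist S → o.map Prod.fst = α → (o.map Prod.snd).prod ≤ c) :
    maxPrS α S ≤ c := by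
  apply aux_unbot'_le hc
  intro a ha
  simp only [List.mem_map, List.mem_filter, List.mem_sublists, decide_eq_true_eq] at ha
  obtain ⟨o, ⟨ho, hm⟩, rfl⟩ := ha
  exact h o ho hm

/-- If `α` has no occurrence in `S`, then `maxPrS α S = 0`. -/
lemma maxPrS_eq_zero {α : List I} {S : USeq I} (h : ¬ Occurs α S) : maxPrS α S = 0 := by
  unfold maxPrS
  have : (S.sublists.filter fun o => decide (o.map Prod.fst = α)) = [] := by
    rw [List.filter_eq_nil_iff]
    intro o ho
    simp only [decide_eq_true_eq]
    intro hm
    exact h ⟨o, List.mem_sublists.mp ho, hm⟩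
  simp [this]

/-- The key lemma: an occurrence split along a prefix factors through the projection,
with the matched part's probability bounded by `maxPrDB`. -/
lemma key_lemma :
    ∀ (γ : List I) (DB : UDB I) (S : USeq I), S ∈ DB →
      (∀ S' ∈ DB, ∀ e ∈ S', e.2 ∈ Set.Icc (0:ℝ) 1) →
      ∀ o1 r : USeq I, (o1 ++ r).Sublist S → o1.map Prod.fst = γ →
      ∃ T, projSeq γ S = some T ∧ r.Sublist T ∧ (o1.map Prod.snd).prod ≤ maxPrDB DB γ := by
  intro γ
  induction γ with
  | nil =>
    intro DB S hS hp o1 r hsub hmap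
    have h1 : o1 = [] := by cases o1 <;> simp_all
    subst h1
    exact ⟨S, by simp [projSeq], by simpa using hsub, by simp [maxPrDB_nil]⟩
  | cons j γ' ih =>
    intro DB S hS hp o1 r hsub hmap
    obtain ⟨e, o1', rfl⟩ : ∃ e o1', o1 = e :: o1' := by
      cases o1 with
      | nil => simp at hmap
      | cons e o1' => exact ⟨e, o1', rfl⟩
    simp only [List.map_cons, List.cons.injEq] at hmap
    obtain ⟨he, hmap'⟩ := hmap
    have hsub1 : ([e] ++ (o1' ++ r)).Sublist S := by simpa using hsub
    obtain ⟨S1, hS1, hsubS1⟩ := occurrence_proj S [j] [e] (o1' ++ r) hsub1 (by simp [he])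
    have hS1mem : S1 ∈ projDB [j] DB := mem_projDB.mpr ⟨S, hS, hS1⟩
    obtain ⟨T, hT, hrT, hprod⟩ := ih (projDB [j] DB) S1 hS1mem (projDB_prob hp [j]) o1' r hsubS1 hmap'
    refine ⟨T, ?_, hrT, ?_⟩
    · have happ := projSeq_append [j] γ' S
      rw [show (j :: γ') = [j] ++ γ' from rfl, happ, hS1]
      exact hT
    · rw [List.map_cons, List.prod_cons, maxPrDB_cons]
      have heS : e ∈ S := hsub.subset (by simp)
      have he2 : e.2 ≤ Phat DB j := he ▸ le_Phat hS heS
      have h0 : 0 ≤ (o1'.map Prod.snd).prod := by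
        apply List.prod_nonneg
        intro x hx
        simp only [List.mem_map] at hx
        obtain ⟨f, hf, rfl⟩ := hx
        have : f ∈ S := hsub.subset (by simp [hf])
        exact (hp S hS f this).1
      exact mul_le_mul he2 hprod h0 (Phat_nonneg (fun S' hS' f hf => (hp S' hS' f hf).1) j)

/-- Per-sequence inequality. -/
lemma perSeq {DB : UDB I} (hp : ∀ S ∈ DB, ∀ e ∈ S, e.2 ∈ Set.Icc (0:ℝ) 1)
    {S : USeq I} (hS : S ∈ DB) (γ' : List I) (i : I) (β : List I) :
    maxPrS (γ' ++ i :: β) S ≤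
      maxPrDB DB γ' * ((projSeq γ' S).map (fun T => maxPrS [i] T)).getD 0 := by
  have hDBnn := maxPrDB_nonneg hp γ'
  have hgetnn : 0 ≤ ((projSeq γ' S).map (fun T => maxPrS [i] T)).getD 0 := by
    cases hps : projSeq γ' S with
    | none => simp
    | some T =>
      simp only [Option.map_some, Option.getD_some]
      exact maxPrS_nonneg (fun e he =>
        (hp S hS e ((projSeq_sublist γ' S T hps).subset he)).1)
  apply maxPrS_le_of_forall (mul_nonneg hDBnn hgetnn)
  intro o ho hm
  obtain ⟨o1, o2, hoeq, hm1, hm2⟩ :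
      ∃ o1 o2, o = o1 ++ o2 ∧ o1.map Prod.fst = γ' ∧ o2.map Prod.fst = i :: β := by
    refine ⟨o.take γ'.length, o.drop γ'.length, (List.take_append_drop _ o).symm, ?_, ?_⟩
    · rw [List.map_take, hm]
      exact List.take_left' rfl
    · rw [List.map_drop, hm]
      exact List.drop_left' rfl
  obtain ⟨e, o2', rfl⟩ : ∃ e o2', o2 = e :: o2' := by
    cases o2 with
    | nil => simp at hm2
    | cons e o2' => exact ⟨e, o2', rfl⟩
  simp only [List.map_cons, List.cons.injEq] at hm2
  obtain ⟨hei, _⟩ := hm2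
  obtain ⟨T, hT, hrT, hprod1⟩ := key_lemma γ' DB S hS hp o1 (e :: o2') (hoeq ▸ ho) hm1
  have hTsub : T.Sublist S := projSeq_sublist γ' S T hT
  have hpT : ∀ f ∈ T, f.2 ∈ Set.Icc (0:ℝ) 1 := fun f hf => hp S hS f (hTsub.subset hf)
  have he2 : e.2 ≤ maxPrS [i] T := by
    have h1 : ([e] : USeq I).Sublist T := ((List.singleton_sublist).mpr (by simp)).trans hrT
    have := le_maxPrS (α := [i]) h1 (by simp [hei])
    simpa using this
  have ho2le : (o2'.map Prod.snd).prod ≤ 1 := by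
    apply aux_list_prod_le_one
    · intro x hx
      simp only [List.mem_map] at hx
      obtain ⟨f, hf, rfl⟩ := hx
      exact (hpT f (hrT.subset (by simp [hf]))).1
    · intro x hx
      simp only [List.mem_map] at hx
      obtain ⟨f, hf, rfl⟩ := hx
      exact (hpT f (hrT.subset (by simp [hf]))).2
  have ho2nn : 0 ≤ (o2'.map Prod.snd).prod := by
    apply List.prod_nonneg
    intro x hx
    simp only [List.mem_map] at hx
    obtain ⟨f, hf, rfl⟩ := hx
    exact (hpT f (hrT.subset (by simp [hf]))).1
  have he2nn : 0 ≤ e.2 := (hpT e (hrT.subset (by simp))).1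
  have hmaxnn : 0 ≤ maxPrS [i] T := maxPrS_nonneg fun f hf => (hpT f hf).1
  rw [hoeq, List.map_append, List.prod_append, List.map_cons, List.prod_cons, hT]
  simp only [Option.map_some, Option.getD_some]
  calc (o1.map Prod.snd).prod * (e.2 * (o2'.map Prod.snd).prod)
      ≤ maxPrDB DB γ' * (maxPrS [i] T * 1) := by
        apply mul_le_mul hprod1 _ (by positivity) hDBnn
        exact mul_le_mul he2 ho2le ho2nn hmaxnn
    _ = maxPrDB DB γ' * maxPrS [i] T := by ring

lemma sum_map_filterMap (DB : UDB I) (h : USeq I → Option (USeq I)) (f : USeq I → ℝ) :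
    ((DB.filterMap h).map f).sum = (DB.map fun S => ((h S).map f).getD 0).sum := by
  induction DB with
  | nil => simp
  | cons S DB ih => cases hS : h S <;> simp [List.filterMap_cons, hS, ih]

end Aux

/-- Completeness of the pruning condition: if all probabilities lie in `[0,1]`, all
weights lie in `[0,1]`, `minWES > 0` and `α` is a nonempty pattern with
`WES(α) ≥ minWES`, then every nonempty prefix `γ` of `α` satisfies
`wExpSup^cap(γ) ≥ minWES`. -/
theorem pruning_condition_complete [DecidableEq I]
    (DB : UDB I) (hp : ∀ S ∈ DB, ∀ e ∈ S, e.2 ∈ Set.Icc (0 : ℝ) 1)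
    (w : I → ℝ) (hw : ∀ x : I, w x ∈ Set.Icc (0 : ℝ) 1)
    (minWES : ℝ) (hmin : 0 < minWES)
    (α : List I) (hα : α ≠ []) (hWES : minWES ≤ WES DB w α) :
    ∀ γ : List I, γ ≠ [] → γ <+: α → minWES ≤ wExpSupCap DB w γ := by
  intro γ hγ hpre
  obtain ⟨β, rfl⟩ := hpre
  obtain ⟨γ', i, rfl⟩ : ∃ γ' i, γ = γ' ++ [i] :=
    ⟨γ.dropLast, γ.getLast hγ, (List.dropLast_append_getLast hγ).symm⟩
  set α : List I := (γ' ++ [i]) ++ β with hα'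
  have hαeq : α = γ' ++ i :: β := by simp [hα']
  -- basic positivity facts
  have hwnn : ∀ x ∈ α.map w, (0:ℝ) ≤ x := by
    intro x hx
    obtain ⟨y, _, rfl⟩ := List.mem_map.mp hx
    exact (hw y).1
  have hlen : 0 < (α.length : ℝ) := by
    have : α.length ≠ 0 := by simp [hαeq]
    positivity
  have hsWnn : 0 ≤ sWeight w α := div_nonneg (List.sum_nonneg hwnn) hlen.le
  have hsW1 : sWeight w α ≤ 1 := by
    rw [sWeight, div_le_one hlen]
    calc (α.map w).sum ≤ (α.map w).length • (1:ℝ) := by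
          exact List.sum_le_card_nsmul _ 1 (fun x hx => by
            obtain ⟨y, _, rfl⟩ := List.mem_map.mp hx
            exact (hw y).2)
      _ = (α.length : ℝ) := by simp
  have hESnn : 0 ≤ expSup DB α :=
    List.sum_nonneg (by
      intro x hx
      obtain ⟨S, hS, rfl⟩ := List.mem_map.mp hx
      exact maxPrS_nonneg fun e he => (hp S hS e he).1)
  have hESpos : 0 < expSup DB α :=
    lt_of_lt_of_le hmin (hWES.trans (mul_le_of_le_one_right hESnn hsW1))
  -- α occurs in some sequence
  have hocc : ∃ S ∈ DB, Occurs α S := by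
    by_contra hno
    push_neg at hno
    have : expSup DB α = 0 := by
      apply List.sum_eq_zero
      intro x hx
      obtain ⟨S, hS, rfl⟩ := List.mem_map.mp hx
      exact maxPrS_eq_zero (hno S hS)
    exact hESpos.ne' this
  obtain ⟨S₀, hS₀, o, ho, hom⟩ := hocc
  -- split the occurrence along γ'
  obtain ⟨o1, o2, hoeq, hm1, hm2⟩ :
      ∃ o1 o2, o = o1 ++ o2 ∧ o1.map Prod.fst = γ' ∧ o2.map Prod.fst = i :: β := by
    refine ⟨o.take γ'.length, o.drop γ'.length, (List.take_append_drop _ o).symm, ?_, ?_⟩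
    · rw [List.map_take, hom, hαeq]
      exact List.take_left' rfl
    · rw [List.map_drop, hom, hαeq]
      exact List.drop_left' rfl
  obtain ⟨T₀, hT₀, hsubT₀⟩ := occurrence_proj S₀ γ' o1 o2 (hoeq ▸ ho) hm1
  have hT₀mem : T₀ ∈ projDB γ' DB := mem_projDB.mpr ⟨S₀, hS₀, hT₀⟩
  -- weight bound
  have hdl : ((γ' ++ [i]) : List I).dropLast = γ' := List.dropLast_concat
  have hwgtnn : 0 ≤ wgtCap DB w (γ' ++ [i]) := by
    refine le_trans ?_ (le_max_right _ _)
    apply aux_unbot'_nonneg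
    intro x hx
    obtain ⟨y, _, rfl⟩ := List.mem_map.mp hx
    exact (hw y).1
  have hwle : sWeight w α ≤ wgtCap DB w (γ' ++ [i]) := by
    rw [sWeight, div_le_iff₀ hlen]
    calc (α.map w).sum ≤ (α.map w).length • (wgtCap DB w (γ' ++ [i])) := by
          apply List.sum_le_card_nsmul
          intro x hx
          obtain ⟨y, hy, rfl⟩ := List.mem_map.mp hx
          rw [hα', List.append_assoc] at hy
          rcases List.mem_append.mp hy with hyγ | hyβ
          · refine le_trans ?_ (le_max_right _ _)
            apply aux_le_unbot'
            exact List.le_maximum_of_mem' (List.mem_map_of_mem (f := w) (List.mem_append_left [i] hyγ))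
          · -- y ∈ [i] ++ β = i :: β, so y is the item of an entry of T₀
            obtain ⟨f, hf, rfl⟩ : ∃ f ∈ o2, f.1 = y := by
              have : y ∈ o2.map Prod.fst := by rw [hm2]; simpa using hyβ
              obtain ⟨f, hf, hfy⟩ := List.mem_map.mp this
              exact ⟨f, hf, hfy⟩
            refine le_trans ?_ (le_max_left _ _)
            rw [hdl]
            apply aux_le_unbot'
            apply List.le_maximum_of_mem'
            exact List.mem_map_of_mem (List.mem_flatten.mpr ⟨T₀, hT₀mem, hsubT₀.subset hf⟩)
      _ = wgtCap DB w (γ' ++ [i]) * (α.length : ℝ) := by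
          simp [nsmul_eq_mul]; ring
  -- expSup bound
  have hcap : expSupCap DB (γ' ++ [i]) =
      maxPrDB DB γ' * ((projDB γ' DB).map fun T => maxPrS [i] T).sum := by
    rw [expSupCap]
    simp [List.getLast?_concat, hdl]
  have hsum : ((projDB γ' DB).map fun T => maxPrS [i] T).sum =
      (DB.map fun S => ((projSeq γ' S).map fun T => maxPrS [i] T).getD 0).sum :=
    sum_map_filterMap DB _ _
  have hES : expSup DB α ≤ expSupCap DB (γ' ++ [i]) := by
    rw [hcap, hsum, expSup, ← List.sum_map_mul_left]
    apply List.sum_le_sum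
    intro S hS
    rw [hαeq]
    exact perSeq hp hS γ' i β
  have hcapnn : 0 ≤ expSupCap DB (γ' ++ [i]) := by
    rw [hcap]
    refine mul_nonneg (maxPrDB_nonneg hp γ') (List.sum_nonneg ?_)
    intro x hx
    obtain ⟨T, hT, rfl⟩ := List.mem_map.mp hx
    exact maxPrS_nonneg fun e he => (projDB_prob hp γ' T hT e he).1
  calc minWES ≤ WES DB w α := hWES
    _ = expSup DB α * sWeight w α := rfl
    _ ≤ expSupCap DB (γ' ++ [i]) * wgtCap DB w (γ' ++ [i]) :=
        mul_le_mul hES hwle hsWnn hcapnn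
    _ = wExpSupCap DB w (γ' ++ [i]) := rfl
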